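/- Let X be a normed space, N ⊆ X a closed subspace, X_h ⊆ X a finite-dimensional subspace, and N_h := N ∩ X_h. Suppose R : X → X_h is a bounded linear projection (R ∘ R = R, range R = X_h) satisfying R(N) ⊆ N_h. Then for every u_h ∈ X_h, the discrete quotient norm inf_{x_h ∈ N_h} ‖u_h + x_h‖ satisfies: inf_{x ∈ N} ‖u_h + x‖ ≤ inf_{x_h ∈ N_h} ‖u_h + x_h‖ ≤ ‖R‖ · inf_{x ∈ N} ‖u_h + x‖. In particular the discrete and continuous quotient norms are equivalent on X_h with constants independent of X_h apart from ‖R‖. -/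
import Mathlib

open scoped Pointwise


/-- Equivalence of discrete and continuous quotient (jump) norms: if `R : X → X` is a
bounded linear projection with range `Xh` mapping `N` into `N ⊓ Xh`, then for `u ∈ Xh`
`inf_{x ∈ N} ‖u + x‖ ≤ inf_{x ∈ N ⊓ Xh} ‖u + x‖ ≤ ‖R‖ · inf_{x ∈ N} ‖u + x‖`. -/
theorem stmt4 (X : Type*) [NormedAddCommGroup X] [NormedSpace ℝ X]
    (N Xh : Submodule ℝ X) (hN : IsClosed (N : Set X)) [FiniteDimensional ℝ Xh]
    (R : X →L[ℝ] X)
    (hproj : ∀ x, R (R x) = R x)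
    (hrange : LinearMap.range (R : X →ₗ[ℝ] X) = Xh)
    (hRN : ∀ x ∈ N, R x ∈ N ⊓ Xh) :
    ∀ u ∈ Xh,
      sInf ((fun x => ‖u + x‖) '' (N : Set X)) ≤
        sInf ((fun x => ‖u + x‖) '' ((N ⊓ Xh : Submodule ℝ X) : Set X)) ∧
      sInf ((fun x => ‖u + x‖) '' ((N ⊓ Xh : Submodule ℝ X) : Set X)) ≤
        ‖R‖ * sInf ((fun x => ‖u + x‖) '' (N : Set X)) := by
  intro u hu
  have hu' : u ∈ LinearMap.range (R : X →ₗ[ℝ] X) := by rw [hrange]; exact hu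
  obtain ⟨v, hv⟩ := hu'
  have hRu : R u = u := by rw [← hv]; exact hproj v
  set S : Set ℝ := (fun x => ‖u + x‖) '' (N : Set X) with hS
  set S' : Set ℝ := (fun x => ‖u + x‖) '' ((N ⊓ Xh : Submodule ℝ X) : Set X) with hS'
  have hS'ne : S'.Nonempty := ⟨‖u + 0‖, 0, Submodule.zero_mem _, rfl⟩
  have hSne : S.Nonempty := ⟨‖u + 0‖, 0, Submodule.zero_mem _, rfl⟩
  have hSbdd : BddBelow S := ⟨0, by rintro a ⟨x, hx, rfl⟩; exact norm_nonneg _⟩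
  have hS'bdd : BddBelow S' := ⟨0, by rintro a ⟨x, hx, rfl⟩; exact norm_nonneg _⟩
  constructor
  · refine csInf_le_csInf hSbdd hS'ne ?_
    rintro a ⟨x, hx, rfl⟩
    exact ⟨x, hx.1, rfl⟩
  · have key : sInf S' ≤ sInf (‖R‖ • S) := by
      refine le_csInf (hSne.smul_set) ?_
      rintro b ⟨a, ⟨x, hx, rfl⟩, rfl⟩
      have h1 : sInf S' ≤ ‖u + R x‖ := csInf_le hS'bdd ⟨R x, hRN x hx, rfl⟩
      have h2 : ‖u + R x‖ ≤ ‖R‖ * ‖u + x‖ := by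
        calc ‖u + R x‖ = ‖R (u + x)‖ := by rw [map_add, hRu]
        _ ≤ ‖R‖ * ‖u + x‖ := R.le_opNorm _
      exact h1.trans h2
    rwa [Real.sInf_smul_of_nonneg (norm_nonneg R), smul_eq_mul] at key
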